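/- Let F be a closed transitive relation on a locally compact, σ-compact Hausdorff space X, and let A, B be disjoint closed subsets of X with F(A) ⊆ A and F⁻¹(B) ⊆ B. Then there exists a continuous function L : X → [0,1] such that (x,y) ∈ F implies L(x) ≤ L(y), L(x) = 1 for all x ∈ A, and L(x) = 0 for all x ∈ B. -/

import Mathlib

open Set Filter Topology

/-- A relation on `X` is transitive. -/
def RelTrans' {X : Type*} (f : Set (X × X)) : Prop :=
  ∀ x y z : X, (x, y) ∈ f → (y, z) ∈ f → (x, z) ∈ f

set_option linter.unusedSectionVars false
namespace Lyap

variable {X : Type*} [TopologicalSpace X]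

/-- `S` is a down-set for `F`. -/
def DSet (F : Set (X × X)) (S : Set X) : Prop := ∀ x y : X, (x, y) ∈ F → y ∈ S → x ∈ S

/-- `S` is an up-set for `F`. -/
def USet (F : Set (X × X)) (S : Set X) : Prop := ∀ x y : X, (x, y) ∈ F → x ∈ S → y ∈ S

/-- down closure -/
def rdown (F : Set (X × X)) (S : Set X) : Set X := {x | x ∈ S ∨ ∃ y ∈ S, (x, y) ∈ F}

/-- up closure -/
def rup (F : Set (X × X)) (S : Set X) : Set X := {y | y ∈ S ∨ ∃ x ∈ S, (x, y) ∈ F}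

lemma subset_rdown (F : Set (X × X)) (S : Set X) : S ⊆ rdown F S := fun _ hx => Or.inl hx

lemma subset_rup (F : Set (X × X)) (S : Set X) : S ⊆ rup F S := fun _ hx => Or.inl hx

lemma rdown_mono (F : Set (X × X)) {S T : Set X} (h : S ⊆ T) : rdown F S ⊆ rdown F T := by
  rintro x (hx | ⟨y, hy, hxy⟩)
  · exact Or.inl (h hx)
  · exact Or.inr ⟨y, h hy, hxy⟩

lemma rup_mono (F : Set (X × X)) {S T : Set X} (h : S ⊆ T) : rup F S ⊆ rup F T := by
  rintro x (hx | ⟨y, hy, hxy⟩)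
  · exact Or.inl (h hx)
  · exact Or.inr ⟨y, h hy, hxy⟩

lemma dset_rdown {F : Set (X × X)} (hFt : RelTrans' F) (S : Set X) : DSet F (rdown F S) := by
  rintro x y hxy (hy | ⟨z, hz, hyz⟩)
  · exact Or.inr ⟨y, hy, hxy⟩
  · exact Or.inr ⟨z, hz, hFt _ _ _ hxy hyz⟩

lemma uset_rup {F : Set (X × X)} (hFt : RelTrans' F) (S : Set X) : USet F (rup F S) := by
  rintro x y hxy (hx | ⟨z, hz, hzx⟩)
  · exact Or.inr ⟨x, hx, hxy⟩
  · exact Or.inr ⟨z, hz, hFt _ _ _ hzx hxy⟩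

lemma disjoint_rdown {F : Set (X × X)} {S D : Set X} (hD : USet F D) (h : Disjoint S D) :
    Disjoint (rdown F S) D := by
  rw [Set.disjoint_left] at h ⊢
  rintro x (hx | ⟨y, hy, hxy⟩) hxD
  · exact h hx hxD
  · exact h hy (hD x y hxy hxD)

lemma disjoint_rup {F : Set (X × X)} {S C : Set X} (hC : DSet F C) (h : Disjoint S C) :
    Disjoint (rup F S) C := by
  rw [Set.disjoint_left] at h ⊢
  rintro y (hy | ⟨x, hx, hxy⟩) hyC
  · exact h hy hyC
  · exact h hx (hC x y hxy hyC)

lemma isClosed_rdown [T2Space X] {F : Set (X × X)} (hF : IsClosed F) {K : Set X}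
    (hK : IsCompact K) : IsClosed (rdown F K) := by
  have hT : IsClosed {x : X | ∃ y ∈ K, (x, y) ∈ F} := by
    rw [← isOpen_compl_iff, isOpen_iff_forall_mem_open]
    intro x hx
    have h1 : ∀ y ∈ K, ∃ ab : Set X × Set X, IsOpen ab.1 ∧ IsOpen ab.2 ∧ x ∈ ab.1 ∧ y ∈ ab.2 ∧
        ∀ x' ∈ ab.1, ∀ y' ∈ ab.2, (x', y') ∉ F := by
      intro y hy
      have hxy : (x, y) ∈ Fᶜ := fun h => hx ⟨y, hy, h⟩
      obtain ⟨a, b, ha, hb, hxa, hyb, hab⟩ := isOpen_prod_iff.1 hF.isOpen_compl x y hxy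
      exact ⟨(a, b), ha, hb, hxa, hyb, fun x' hx' y' hy' h => hab (Set.mk_mem_prod hx' hy') h⟩
    choose ab ha hb hxa hyb hab using h1
    obtain ⟨t, hcov⟩ := hK.elim_nhds_subcover' (fun y hy => (ab y hy).2)
      (fun y hy => (hb y hy).mem_nhds (hyb y hy))
    refine ⟨⋂ y ∈ t, (ab y y.2).1, ?_, ?_, ?_⟩
    · intro x' hx'
      rintro ⟨y, hyK, hy'F⟩
      obtain ⟨z, hz⟩ := Set.mem_iUnion.1 (hcov hyK)
      obtain ⟨hzt, hyz⟩ := Set.mem_iUnion.1 hz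
      exact hab z z.2 x' (by exact Set.mem_iInter₂.1 hx' z hzt) y hyz hy'F
    · exact isOpen_biInter_finset fun y _ => ha y y.2
    · exact Set.mem_iInter₂.2 fun y _ => hxa y y.2
  have : rdown F K = K ∪ {x : X | ∃ y ∈ K, (x, y) ∈ F} := rfl
  rw [this]
  exact hK.isClosed.union hT

lemma isClosed_rup [T2Space X] {F : Set (X × X)} (hF : IsClosed F) {K : Set X}
    (hK : IsCompact K) : IsClosed (rup F K) := by
  have hT : IsClosed {y : X | ∃ x ∈ K, (x, y) ∈ F} := by
    rw [← isOpen_compl_iff, isOpen_iff_forall_mem_open]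
    intro y hy
    have h1 : ∀ x ∈ K, ∃ ab : Set X × Set X, IsOpen ab.1 ∧ IsOpen ab.2 ∧ x ∈ ab.1 ∧ y ∈ ab.2 ∧
        ∀ x' ∈ ab.1, ∀ y' ∈ ab.2, (x', y') ∉ F := by
      intro x hx
      have hxy : (x, y) ∈ Fᶜ := fun h => hy ⟨x, hx, h⟩
      obtain ⟨a, b, ha, hb, hxa, hyb, hab⟩ := isOpen_prod_iff.1 hF.isOpen_compl x y hxy
      exact ⟨(a, b), ha, hb, hxa, hyb, fun x' hx' y' hy' h => hab (Set.mk_mem_prod hx' hy') h⟩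
    choose ab ha hb hxa hyb hab using h1
    obtain ⟨t, hcov⟩ := hK.elim_nhds_subcover' (fun x hx => (ab x hx).1)
      (fun x hx => (ha x hx).mem_nhds (hxa x hx))
    refine ⟨⋂ x ∈ t, (ab x x.2).2, ?_, ?_, ?_⟩
    · intro y' hy'
      rintro ⟨x, hxK, hxF⟩
      obtain ⟨z, hz⟩ := Set.mem_iUnion.1 (hcov hxK)
      obtain ⟨hzt, hxz⟩ := Set.mem_iUnion.1 hz
      exact hab z z.2 x hxz y' (by exact Set.mem_iInter₂.1 hy' z hzt) hxF
    · exact isOpen_biInter_finset fun x _ => hb x x.2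
    · exact Set.mem_iInter₂.2 fun x _ => hyb x x.2
  have : rup F K = K ∪ {y : X | ∃ x ∈ K, (x, y) ∈ F} := rfl
  rw [this]
  exact hK.isClosed.union hT

/-- Separation of a compact set from a closed set, with compact closure. -/
lemma sep [LocallyCompactSpace X] [T2Space X] {M S : Set X} (hM : IsCompact M)
    (hS : IsClosed S) (h : Disjoint M S) :
    ∃ U : Set X, IsOpen U ∧ M ⊆ U ∧ IsCompact (closure U) ∧ Disjoint (closure U) S := by
  obtain ⟨L, hL, hML, hLS⟩ := exists_compact_between hM hS.isOpen_compl
    (Set.subset_compl_iff_disjoint_right.2 h)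
  have hcl : closure (interior L) ⊆ L :=
    (closure_mono interior_subset).trans hL.isClosed.closure_eq.subset
  exact ⟨interior L, isOpen_interior, hML, hL.of_isClosed_subset isClosed_closure hcl,
    Set.subset_compl_iff_disjoint_right.1 (hcl.trans hLS)⟩


section Normality

variable [LocallyCompactSpace X] [SigmaCompactSpace X] [T2Space X]

/-- The invariant for the inductive construction in the ordered normality lemma. -/
def NInv (F : Set (X × X)) (C D : Set X) (K : CompactExhaustion X) (n : ℕ) (U V : Set X) :
    Prop :=
  IsOpen U ∧ IsOpen V ∧ IsCompact (closure U) ∧ IsCompact (closure V) ∧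
    C ∩ K n ⊆ U ∧ D ∩ K n ⊆ V ∧
    Disjoint (C ∪ rdown F (closure U)) (D ∪ rup F (closure V))

/-- Ordered normality: a closed down-set and a closed up-set that are disjoint can be
separated by a down-open set and an up-open set. -/
theorem normality {F : Set (X × X)} (hF : IsClosed F) (hFt : RelTrans' F)
    {C D : Set X} (hC : IsClosed C) (hD : IsClosed D)
    (hCd : DSet F C) (hDu : USet F D) (hCD : Disjoint C D) :
    ∃ U V : Set X, IsOpen U ∧ IsOpen V ∧ C ⊆ U ∧ D ⊆ V ∧ Disjoint U V ∧
      DSet F U ∧ USet F V := by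
  classical
  set K : CompactExhaustion X := CompactExhaustion.choice X with hKdef
  -- generic step
  have step : ∀ (C' D' M N : Set X), IsClosed C' → IsClosed D' → DSet F C' → USet F D' →
      Disjoint C' D' → IsCompact M → M ⊆ C' → IsCompact N → N ⊆ D' →
      ∃ U V : Set X, IsOpen U ∧ IsOpen V ∧ IsCompact (closure U) ∧ IsCompact (closure V) ∧
        M ⊆ U ∧ N ⊆ V ∧ Disjoint (C' ∪ rdown F (closure U)) (D' ∪ rup F (closure V)) := by
    intro C' D' M N hC' hD' hC'd hD'u hC'D' hM hMC hN hND
    obtain ⟨U, hUo, hMU, hUc, hUD'⟩ := sep hM hD' (hC'D'.mono_left hMC)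
    have hPdown : DSet F (rdown F (closure U)) := dset_rdown hFt _
    have hPclosed : IsClosed (rdown F (closure U)) := isClosed_rdown hF hUc
    have hPD' : Disjoint (rdown F (closure U)) D' := disjoint_rdown hD'u hUD'
    have hC''closed : IsClosed (C' ∪ rdown F (closure U)) := hC'.union hPclosed
    have hC''d : DSet F (C' ∪ rdown F (closure U)) := by
      rintro x y hxy (hy | hy)
      · exact Or.inl (hC'd x y hxy hy)
      · exact Or.inr (hPdown x y hxy hy)
    have hC''D' : Disjoint (C' ∪ rdown F (closure U)) D' :=
      Set.disjoint_union_left.2 ⟨hC'D', hPD'⟩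
    obtain ⟨V, hVo, hNV, hVc, hVC''⟩ := sep hN hC''closed (hC''D'.symm.mono_left hND)
    have hQC'' : Disjoint (rup F (closure V)) (C' ∪ rdown F (closure U)) :=
      disjoint_rup hC''d hVC''
    refine ⟨U, V, hUo, hVo, hUc, hVc, hMU, hNV, ?_⟩
    rw [Set.disjoint_union_right]
    exact ⟨hC''D', hQC''.symm⟩
  -- base case
  have ex0 : ∃ U V : Set X, NInv F C D K 0 U V := by
    obtain ⟨U, V, h1, h2, h3, h4, h5, h6, h7⟩ := step C D (C ∩ K 0) (D ∩ K 0) hC hD hCd hDu hCD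
      ((K.isCompact 0).inter_left hC) Set.inter_subset_left
      ((K.isCompact 0).inter_left hD) Set.inter_subset_left
    exact ⟨U, V, h1, h2, h3, h4, h5, h6, h7⟩
  -- inductive step
  have exS : ∀ (n : ℕ) (U V : Set X), NInv F C D K n U V → ∃ U' V' : Set X,
      NInv F C D K (n + 1) U' V' ∧
      closure U ⊆ U' ∧ rdown F (closure U) ∩ K (n + 1) ⊆ U' ∧
      closure V ⊆ V' ∧ rup F (closure V) ∩ K (n + 1) ⊆ V' := by
    rintro n U V ⟨hUo, hVo, hUc, hVc, hCU, hDV, hdisj⟩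
    have hC' : IsClosed (C ∪ rdown F (closure U)) := hC.union (isClosed_rdown hF hUc)
    have hD' : IsClosed (D ∪ rup F (closure V)) := hD.union (isClosed_rup hF hVc)
    have hC'd : DSet F (C ∪ rdown F (closure U)) := fun x y hxy hy =>
      hy.elim (fun h => Or.inl (hCd x y hxy h)) (fun h => Or.inr (dset_rdown hFt _ x y hxy h))
    have hD'u : USet F (D ∪ rup F (closure V)) := fun x y hxy hx =>
      hx.elim (fun h => Or.inl (hDu x y hxy h)) (fun h => Or.inr (uset_rup hFt _ x y hxy h))
    have hMc : IsCompact (((C ∪ rdown F (closure U)) ∩ K (n + 1)) ∪ closure U) :=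
      ((K.isCompact (n + 1)).inter_left hC').union hUc
    have hNc : IsCompact (((D ∪ rup F (closure V)) ∩ K (n + 1)) ∪ closure V) :=
      ((K.isCompact (n + 1)).inter_left hD').union hVc
    have hMC' : ((C ∪ rdown F (closure U)) ∩ K (n + 1)) ∪ closure U ⊆ C ∪ rdown F (closure U) :=
      Set.union_subset Set.inter_subset_left ((subset_rdown F _).trans Set.subset_union_right)
    have hND' : ((D ∪ rup F (closure V)) ∩ K (n + 1)) ∪ closure V ⊆ D ∪ rup F (closure V) :=
      Set.union_subset Set.inter_subset_left ((subset_rup F _).trans Set.subset_union_right)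
    obtain ⟨U', V', h1, h2, h3, h4, h5, h6, h7⟩ :=
      step _ _ _ _ hC' hD' hC'd hD'u hdisj hMc hMC' hNc hND'
    refine ⟨U', V', ⟨h1, h2, h3, h4, ?_, ?_, ?_⟩, ?_, ?_, ?_, ?_⟩
    · exact fun x hx => h5 (Or.inl ⟨Or.inl hx.1, hx.2⟩)
    · exact fun x hx => h6 (Or.inl ⟨Or.inl hx.1, hx.2⟩)
    · exact h7.mono
        (Set.union_subset (Set.subset_union_left.trans Set.subset_union_left)
          Set.subset_union_right)
        (Set.union_subset (Set.subset_union_left.trans Set.subset_union_left)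
          Set.subset_union_right)
    · exact Set.subset_union_right.trans h5
    · exact fun x hx => h5 (Or.inl ⟨Or.inr hx.1, hx.2⟩)
    · exact Set.subset_union_right.trans h6
    · exact fun x hx => h6 (Or.inl ⟨Or.inr hx.1, hx.2⟩)
  obtain ⟨U0, V0, hInv0⟩ := ex0
  choose U' V' hInv' hcu hdu hcv hev using exS
  let f : (n : ℕ) → {p : Set X × Set X // NInv F C D K n p.1 p.2} := fun n =>
    Nat.rec ⟨(U0, V0), hInv0⟩
      (fun n ih => ⟨(U' n ih.1.1 ih.1.2 ih.2, V' n ih.1.1 ih.1.2 ih.2),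
        hInv' n ih.1.1 ih.1.2 ih.2⟩) n
  set Us : ℕ → Set X := fun n => (f n).1.1 with hUs
  set Vs : ℕ → Set X := fun n => (f n).1.2 with hVs
  have hInvn : ∀ n, NInv F C D K n (Us n) (Vs n) := fun n => (f n).2
  have hUsucc : ∀ n, Us (n + 1) = U' n (Us n) (Vs n) (f n).2 := fun n => rfl
  have hVsucc : ∀ n, Vs (n + 1) = V' n (Us n) (Vs n) (f n).2 := fun n => rfl
  have hUclmono : ∀ n, closure (Us n) ⊆ Us (n + 1) := fun n => by
    rw [hUsucc n]; exact hcu n _ _ _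
  have hVclmono : ∀ n, closure (Vs n) ⊆ Vs (n + 1) := fun n => by
    rw [hVsucc n]; exact hcv n _ _ _
  have hUmono : ∀ {m n : ℕ}, m ≤ n → Us m ⊆ Us n := fun {m n} h =>
    monotone_nat_of_le_succ (fun k => subset_closure.trans (hUclmono k)) h
  have hVmono : ∀ {m n : ℕ}, m ≤ n → Vs m ⊆ Vs n := fun {m n} h =>
    monotone_nat_of_le_succ (fun k => subset_closure.trans (hVclmono k)) h
  have hdun : ∀ n, rdown F (closure (Us n)) ∩ K (n + 1) ⊆ Us (n + 1) := fun n => by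
    rw [hUsucc n]; exact hdu n _ _ _
  have hevn : ∀ n, rup F (closure (Vs n)) ∩ K (n + 1) ⊆ Vs (n + 1) := fun n => by
    rw [hVsucc n]; exact hev n _ _ _
  refine ⟨⋃ n, Us n, ⋃ n, Vs n, isOpen_iUnion (fun n => (hInvn n).1),
    isOpen_iUnion (fun n => (hInvn n).2.1), ?_, ?_, ?_, ?_, ?_⟩
  · intro x hx
    obtain ⟨n, hn⟩ := K.exists_mem x
    exact Set.mem_iUnion.2 ⟨n, (hInvn n).2.2.2.2.1 ⟨hx, hn⟩⟩
  · intro x hx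
    obtain ⟨n, hn⟩ := K.exists_mem x
    exact Set.mem_iUnion.2 ⟨n, (hInvn n).2.2.2.2.2.1 ⟨hx, hn⟩⟩
  · rw [Set.disjoint_left]
    intro x hx hx'
    obtain ⟨n, hn⟩ := Set.mem_iUnion.1 hx
    obtain ⟨m, hm⟩ := Set.mem_iUnion.1 hx'
    have hn' : x ∈ Us (max n m) := hUmono (le_max_left n m) hn
    have hm' : x ∈ Vs (max n m) := hVmono (le_max_right n m) hm
    exact Set.disjoint_left.1 (hInvn (max n m)).2.2.2.2.2.2
      (Or.inr (subset_rdown F _ (subset_closure hn')))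
      (Or.inr (subset_rup F _ (subset_closure hm')))
  · intro x y hxy hy
    obtain ⟨n, hn⟩ := Set.mem_iUnion.1 hy
    obtain ⟨m, hm⟩ := K.exists_mem x
    have h1 : x ∈ rdown F (closure (Us (max n m))) :=
      Or.inr ⟨y, subset_closure (hUmono (le_max_left n m) hn), hxy⟩
    have h2 : x ∈ K (max n m + 1) := K.subset (le_trans (le_max_right n m) (Nat.le_succ _)) hm
    exact Set.mem_iUnion.2 ⟨max n m + 1, hdun (max n m) ⟨h1, h2⟩⟩
  · intro x y hxy hx
    obtain ⟨n, hn⟩ := Set.mem_iUnion.1 hx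
    obtain ⟨m, hm⟩ := K.exists_mem y
    have h1 : y ∈ rup F (closure (Vs (max n m))) :=
      Or.inr ⟨x, subset_closure (hVmono (le_max_left n m) hn), hxy⟩
    have h2 : y ∈ K (max n m + 1) := K.subset (le_trans (le_max_right n m) (Nat.le_succ _)) hm
    exact Set.mem_iUnion.2 ⟨max n m + 1, hevn (max n m) ⟨h1, h2⟩⟩

/-- The interpolation property needed for the order Urysohn construction. -/
theorem interp {F : Set (X × X)} (hF : IsClosed F) (hFt : RelTrans' F)
    (c u : Set X) (hc : IsClosed c) (hcd : DSet F c) (hu : IsOpen u) (hud : DSet F u)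
    (hcu : c ⊆ u) :
    ∃ p : Set X × Set X, IsOpen p.1 ∧ DSet F p.1 ∧ c ⊆ p.1 ∧ p.1 ⊆ p.2 ∧
      IsClosed p.2 ∧ DSet F p.2 ∧ p.2 ⊆ u := by
  have hucu : USet F uᶜ := fun x y hxy hx hyu => hx (hud x y hxy hyu)
  obtain ⟨U, V, hUo, hVo, hcU, hucV, hUV, hUd, hVu⟩ := normality hF hFt hc hu.isClosed_compl
    hcd hucu (Set.disjoint_compl_right_iff_subset.2 hcu)
  refine ⟨(U, Vᶜ), hUo, hUd, hcU, ?_, hVo.isClosed_compl, ?_, ?_⟩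
  · exact Set.subset_compl_iff_disjoint_right.2 (Set.disjoint_right.2 fun a ha ha' =>
      Set.disjoint_left.1 hUV ha' ha)
  · exact fun x y hxy hy hxV => hy (hVu x y hxy hxV)
  · intro x hx
    by_contra hxu
    exact hx (hucV hxu)

end Normality


/-- A pair `(C, U)` of a closed down-set and a down-open neighborhood, together with
the interpolation property, for the order Urysohn construction. -/
structure DCU (F : Set (X × X)) where
  protected C : Set X
  protected U : Set X
  protected closed_C : IsClosed C
  protected open_U : IsOpen U
  protected subset : C ⊆ U
  protected down_C : DSet F C
  protected down_U : DSet F U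
  protected hP : ∀ c u : Set X, IsClosed c → DSet F c → IsOpen u → DSet F u → c ⊆ u →
    ∃ p : Set X × Set X, IsOpen p.1 ∧ DSet F p.1 ∧ c ⊆ p.1 ∧ p.1 ⊆ p.2 ∧
      IsClosed p.2 ∧ DSet F p.2 ∧ p.2 ⊆ u

namespace DCU

variable {F : Set (X × X)}

/-- The left child in the Urysohn construction. -/
noncomputable def left (c : DCU F) : DCU F where
  C := c.C
  U := (c.hP c.C c.U c.closed_C c.down_C c.open_U c.down_U c.subset).choose.1
  closed_C := c.closed_C
  open_U := (c.hP c.C c.U c.closed_C c.down_C c.open_U c.down_U c.subset).choose_spec.1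
  subset := (c.hP c.C c.U c.closed_C c.down_C c.open_U c.down_U c.subset).choose_spec.2.2.1
  down_C := c.down_C
  down_U := (c.hP c.C c.U c.closed_C c.down_C c.open_U c.down_U c.subset).choose_spec.2.1
  hP := c.hP

/-- The right child in the Urysohn construction. -/
noncomputable def right (c : DCU F) : DCU F where
  C := (c.hP c.C c.U c.closed_C c.down_C c.open_U c.down_U c.subset).choose.2
  U := c.U
  closed_C := (c.hP c.C c.U c.closed_C c.down_C c.open_U c.down_U c.subset).choose_spec.2.2.2.2.1
  open_U := c.open_U
  subset := (c.hP c.C c.U c.closed_C c.down_C c.open_U c.down_U c.subset).choose_spec.2.2.2.2.2.2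
  down_C := (c.hP c.C c.U c.closed_C c.down_C c.open_U c.down_U c.subset).choose_spec.2.2.2.2.2.1
  down_U := c.down_U
  hP := c.hP

theorem left_U_subset_right_C (c : DCU F) : c.left.U ⊆ c.right.C :=
  (c.hP c.C c.U c.closed_C c.down_C c.open_U c.down_U c.subset).choose_spec.2.2.2.1

theorem left_U_subset (c : DCU F) : c.left.U ⊆ c.U :=
  Subset.trans c.left_U_subset_right_C c.right.subset

theorem subset_right_C (c : DCU F) : c.C ⊆ c.right.C :=
  Subset.trans c.left.subset c.left_U_subset_right_C

@[simp] theorem left_C (c : DCU F) : c.left.C = c.C := rfl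

@[simp] theorem right_U (c : DCU F) : c.right.U = c.U := rfl

/-- `n`-th approximation to the Lyapunov function. -/
noncomputable def approx : ℕ → DCU F → X → ℝ
  | 0, c, x => indicator c.Uᶜ 1 x
  | n + 1, c, x => midpoint ℝ (approx n c.left x) (approx n c.right x)

theorem approx_of_mem_C (c : DCU F) (n : ℕ) {x : X} (hx : x ∈ c.C) : c.approx n x = 0 := by
  induction n generalizing c with
  | zero => exact indicator_of_notMem (fun (hU : x ∈ c.Uᶜ) => hU <| c.subset hx) _
  | succ n ihn =>
    simp only [approx]
    rw [ihn, ihn, midpoint_self]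
    exacts [c.subset_right_C hx, hx]

theorem approx_of_nmem_U (c : DCU F) (n : ℕ) {x : X} (hx : x ∉ c.U) : c.approx n x = 1 := by
  induction n generalizing c with
  | zero =>
    rw [← mem_compl_iff] at hx
    exact indicator_of_mem hx _
  | succ n ihn =>
    simp only [approx]
    rw [ihn, ihn, midpoint_self]
    exacts [hx, fun hU => hx <| c.left_U_subset hU]

theorem approx_nonneg (c : DCU F) (n : ℕ) (x : X) : 0 ≤ c.approx n x := by
  induction n generalizing c with
  | zero => exact indicator_nonneg (fun _ _ => zero_le_one) _
  | succ n ihn =>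
    simp only [approx, midpoint_eq_smul_add, invOf_eq_inv]
    refine mul_nonneg (inv_nonneg.2 zero_le_two) (add_nonneg ?_ ?_) <;> apply ihn

theorem approx_le_one (c : DCU F) (n : ℕ) (x : X) : c.approx n x ≤ 1 := by
  induction n generalizing c with
  | zero => exact indicator_apply_le' (fun _ => le_rfl) fun _ => zero_le_one
  | succ n ihn =>
    simp only [approx, midpoint_eq_smul_add, invOf_eq_inv, smul_eq_mul, ← div_eq_inv_mul]
    have := add_le_add (ihn (left c)) (ihn (right c))
    norm_num at this
    exact Iff.mpr (div_le_one zero_lt_two) this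

theorem bddAbove_range_approx (c : DCU F) (x : X) : BddAbove (range fun n => c.approx n x) :=
  ⟨1, fun _ ⟨n, hn⟩ => hn ▸ c.approx_le_one n x⟩

theorem approx_le_approx_of_U_sub_C {c₁ c₂ : DCU F} (h : c₁.U ⊆ c₂.C) (n₁ n₂ : ℕ) (x : X) :
    c₂.approx n₂ x ≤ c₁.approx n₁ x := by
  by_cases hx : x ∈ c₁.U
  · calc
      approx n₂ c₂ x = 0 := approx_of_mem_C _ _ (h hx)
      _ ≤ approx n₁ c₁ x := approx_nonneg _ _ _
  · calc
      approx n₂ c₂ x ≤ 1 := approx_le_one _ _ _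
      _ = approx n₁ c₁ x := (approx_of_nmem_U _ _ hx).symm

theorem approx_mem_Icc_right_left (c : DCU F) (n : ℕ) (x : X) :
    c.approx n x ∈ Icc (c.right.approx n x) (c.left.approx n x) := by
  induction' n with n ihn generalizing c
  · exact ⟨le_rfl, indicator_le_indicator_of_subset (compl_subset_compl.2 c.left_U_subset)
      (fun _ => zero_le_one) _⟩
  · simp only [approx, mem_Icc]
    refine ⟨midpoint_le_midpoint ?_ (ihn _).1, midpoint_le_midpoint (ihn _).2 ?_⟩ <;>
      apply approx_le_approx_of_U_sub_C
    exacts [c.left_U_subset_right_C, c.left_U_subset_right_C]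

theorem approx_le_succ (c : DCU F) (n : ℕ) (x : X) : c.approx n x ≤ c.approx (n + 1) x := by
  induction' n with n ihn generalizing c
  · simp only [approx, right_U, right_le_midpoint]
    exact (approx_mem_Icc_right_left c 0 x).2
  · rw [approx, approx]
    exact midpoint_le_midpoint (ihn _) (ihn _)

theorem approx_mono (c : DCU F) (x : X) : Monotone fun n => c.approx n x :=
  monotone_nat_of_le_succ fun n => c.approx_le_succ n x

/-- Monotonicity of the approximations along the relation. -/
theorem approx_rel (c : DCU F) (n : ℕ) {x y : X} (hxy : (x, y) ∈ F) :
    c.approx n x ≤ c.approx n y := by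
  induction n generalizing c with
  | zero =>
    by_cases hx : x ∈ c.U
    · calc c.approx 0 x = 0 := indicator_of_notMem (not_not_intro hx) _
        _ ≤ c.approx 0 y := c.approx_nonneg 0 y
    · have hy : y ∉ c.U := fun hy => hx (c.down_U x y hxy hy)
      rw [c.approx_of_nmem_U 0 hx, c.approx_of_nmem_U 0 hy]
  | succ n ihn =>
    simp only [approx]
    exact midpoint_le_midpoint (ihn c.left) (ihn c.right)

/-- The limit function: the Lyapunov function. -/
protected noncomputable def lim (c : DCU F) (x : X) : ℝ :=
  ⨆ n, c.approx n x

theorem tendsto_approx_atTop (c : DCU F) (x : X) :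
    Tendsto (fun n => c.approx n x) atTop (nhds <| c.lim x) :=
  tendsto_atTop_ciSup (c.approx_mono x) ⟨1, fun _ ⟨_, hn⟩ => hn ▸ c.approx_le_one _ _⟩

theorem lim_of_mem_C (c : DCU F) (x : X) (h : x ∈ c.C) : c.lim x = 0 := by
  simp only [DCU.lim, approx_of_mem_C, h, ciSup_const]

theorem lim_of_nmem_U (c : DCU F) (x : X) (h : x ∉ c.U) : c.lim x = 1 := by
  simp only [DCU.lim, approx_of_nmem_U c _ h, ciSup_const]

theorem lim_eq_midpoint (c : DCU F) (x : X) :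
    c.lim x = midpoint ℝ (c.left.lim x) (c.right.lim x) := by
  refine tendsto_nhds_unique (c.tendsto_approx_atTop x) ((tendsto_add_atTop_iff_nat 1).1 ?_)
  simp only [approx]
  exact (c.left.tendsto_approx_atTop x).midpoint (c.right.tendsto_approx_atTop x)

theorem approx_le_lim (c : DCU F) (x : X) (n : ℕ) : c.approx n x ≤ c.lim x :=
  le_ciSup (c.bddAbove_range_approx x) _

theorem lim_nonneg (c : DCU F) (x : X) : 0 ≤ c.lim x :=
  (c.approx_nonneg 0 x).trans (c.approx_le_lim x 0)

theorem lim_le_one (c : DCU F) (x : X) : c.lim x ≤ 1 :=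
  ciSup_le fun _ => c.approx_le_one _ _

theorem lim_mem_Icc (c : DCU F) (x : X) : c.lim x ∈ Icc (0 : ℝ) 1 :=
  ⟨c.lim_nonneg x, c.lim_le_one x⟩

/-- The limit is a Lyapunov function for the relation. -/
theorem lim_rel (c : DCU F) {x y : X} (hxy : (x, y) ∈ F) : c.lim x ≤ c.lim y :=
  ciSup_le fun n => (c.approx_rel n hxy).trans (c.approx_le_lim y n)

/-- Continuity of the limit function. -/
theorem continuous_lim (c : DCU F) : Continuous c.lim := by
  obtain ⟨h0, h1234, h1⟩ : 0 < (2⁻¹ : ℝ) ∧ (2⁻¹ : ℝ) < 3 / 4 ∧ (3 / 4 : ℝ) < 1 := by norm_num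
  refine
    continuous_iff_continuousAt.2 fun x =>
      (Metric.nhds_basis_closedBall_pow (h0.trans h1234) h1).tendsto_right_iff.2 fun n _ => ?_
  simp only [Metric.mem_closedBall]
  induction' n with n ihn generalizing c
  · filter_upwards with y
    rw [pow_zero]
    exact Real.dist_le_of_mem_Icc_01 (c.lim_mem_Icc _) (c.lim_mem_Icc _)
  · by_cases hxl : x ∈ c.left.U
    · filter_upwards [IsOpen.mem_nhds c.left.open_U hxl, ihn c.left] with _ hyl hyd
      rw [pow_succ', c.lim_eq_midpoint, c.lim_eq_midpoint,
        c.right.lim_of_mem_C _ (c.left_U_subset_right_C hyl),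
        c.right.lim_of_mem_C _ (c.left_U_subset_right_C hxl)]
      refine (dist_midpoint_midpoint_le _ _ _ _).trans ?_
      rw [dist_self, add_zero, div_eq_inv_mul]
      gcongr
    · replace hxl : x ∈ c.left.right.Cᶜ :=
        compl_subset_compl.2 c.left.right.subset hxl
      filter_upwards [IsOpen.mem_nhds (isOpen_compl_iff.2 c.left.right.closed_C) hxl,
        ihn c.left.right, ihn c.right] with y hyl hydl hydr
      replace hxl : x ∉ c.left.left.U :=
        compl_subset_compl.2 c.left.left_U_subset_right_C hxl
      replace hyl : y ∉ c.left.left.U :=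
        compl_subset_compl.2 c.left.left_U_subset_right_C hyl
      simp only [pow_succ, c.lim_eq_midpoint, c.left.lim_eq_midpoint,
        c.left.left.lim_of_nmem_U _ hxl, c.left.left.lim_of_nmem_U _ hyl]
      refine (dist_midpoint_midpoint_le _ _ _ _).trans ?_
      refine (div_le_div_of_nonneg_right (add_le_add (dist_midpoint_midpoint_le _ _ _ _) le_rfl)
        zero_le_two).trans ?_
      rw [dist_self, zero_add]
      set r := (3 / 4 : ℝ) ^ n
      calc _ ≤ (r / 2 + r) / 2 := by gcongr
        _ = _ := by field_simp; ring

end DCU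

end Lyap


/-- The image of a set `A` under a relation `f ⊆ X × Y`. -/
def relImage {X Y : Type*} (f : Set (X × Y)) (A : Set X) : Set Y :=
  {y | ∃ x ∈ A, (x, y) ∈ f}

/-- The reverse (inverse) relation of `f ⊆ X × Y`. -/
def relInv {X Y : Type*} (f : Set (X × Y)) : Set (Y × X) :=
  {p | (p.2, p.1) ∈ f}

/-- Composition of relations: `relComp g f = g ∘ f` (first `f`, then `g`). -/
def relComp {X Y Z : Type*} (g : Set (Y × Z)) (f : Set (X × Y)) : Set (X × Z) :=
  {p | ∃ y, (p.1, y) ∈ f ∧ (y, p.2) ∈ g}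

/-- A relation on `X` is transitive. -/
def RelTrans {X : Type*} (f : Set (X × X)) : Prop :=
  ∀ x y z : X, (x, y) ∈ f → (y, z) ∈ f → (x, z) ∈ f

/-- `gRel f` is the smallest closed transitive relation containing `f`:
the intersection of all closed transitive relations containing `f`. -/
def gRel {X : Type*} [TopologicalSpace X] (f : Set (X × X)) : Set (X × X) :=
  ⋂₀ {g : Set (X × X) | f ⊆ g ∧ IsClosed g ∧ RelTrans g}

/-- Urysohn lemma for Lyapunov functions: Let `F` be a closed transitive
relation on a locally compact, σ-compact Hausdorff space `X`, and `A, B` disjoint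
closed sets with `F(A) ⊆ A` and `F⁻¹(B) ⊆ B`.  Then there is a continuous Lyapunov
function `L : X → [0,1]` for `F` with `L = 1` on `A` and `L = 0` on `B`. -/
theorem lyapunov_urysohn
    {X : Type*} [TopologicalSpace X] [LocallyCompactSpace X]
    [SigmaCompactSpace X] [T2Space X]
    (F : Set (X × X)) (hF : IsClosed F) (hFt : RelTrans F)
    (A B : Set X) (hA : IsClosed A) (hB : IsClosed B) (hAB : Disjoint A B)
    (hAinv : relImage F A ⊆ A) (hBinv : relImage (relInv F) B ⊆ B) :
    ∃ L : X → ℝ, Continuous L ∧ (∀ x : X, L x ∈ Set.Icc (0:ℝ) 1) ∧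
      (∀ x y : X, (x, y) ∈ F → L x ≤ L y) ∧
      (∀ x ∈ A, L x = 1) ∧ (∀ x ∈ B, L x = 0) := by
  classical
  have hFt' : RelTrans' F := hFt
  set c : Lyap.DCU F :=
    { C := B
      U := Aᶜ
      closed_C := hB
      open_U := hA.isOpen_compl
      subset := fun x hx hxA => Set.disjoint_left.1 hAB hxA hx
      down_C := fun x y hxy hyB => hBinv ⟨y, hyB, hxy⟩
      down_U := fun x y hxy hyU hxA => hyU (hAinv ⟨x, hxA, hxy⟩)
      hP := Lyap.interp hF hFt' } with hc
  refine ⟨c.lim, c.continuous_lim, c.lim_mem_Icc, fun x y h => c.lim_rel h,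
    fun x hx => c.lim_of_nmem_U x (not_not_intro hx), fun x hx => c.lim_of_mem_C x hx⟩
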